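/- Let v = Σ_N c_N φ_N be a nonzero element of H* with only finitely many c_N ≠ 0, and let Z be a rooted forest with c_Z ≠ 0 whose total number of vertices is maximal among all forests N with c_N ≠ 0. Then E^top_Z v = c_Z φ_∅. -/

import Mathlib

open scoped Classical

/-- Concrete (labeled) rooted trees: a root with a list of subtrees. -/
inductive RTree : Type
  | node : List RTree → RTree

/-- Shapes of admissible cuts: at each tree, either the full cut
(everything, including the root, goes to the pruned part `P`), or a choice of
an admissible cut of each child subtree.  A `full` occurring strictly inside
corresponds to cutting the edge above that vertex. -/
inductive CutShape : Type
  | full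
  | branch : List CutShape → CutShape

namespace CK

/-- Number of vertices of a forest. -/
def sizeL : List RTree → ℕ
  | [] => 0
  | .node l :: ts => 1 + sizeL l + sizeL ts

/-- All admissible cuts of a forest (a choice of admissible cut of each tree). -/
def cutsF : List RTree → List (List CutShape)
  | [] => [[]]
  | .node l :: ts =>
      (CutShape.full :: (cutsF l).map CutShape.branch).flatMap
        fun c => (cutsF ts).map (c :: ·)

/-- The root part `R_C(F)` of a cut. -/
def Rcut : List RTree → List CutShape → List RTree
  | [], _ => []
  | _ :: _, [] => []
  | .node _ :: ts, .full :: cs => Rcut ts cs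
  | .node l :: ts, .branch ds :: cs => RTree.node (Rcut l ds) :: Rcut ts cs

/-- The pruned part `P_C(F)` of a cut. -/
def Pcut : List RTree → List CutShape → List RTree
  | [], _ => []
  | _ :: _, [] => []
  | .node l :: ts, .full :: cs => RTree.node l :: Pcut ts cs
  | .node l :: ts, .branch ds :: cs => Pcut l ds ++ Pcut ts cs

/-- Number of `full`s occurring in a cut. -/
def fullsL : List CutShape → ℕ
  | [] => 0
  | .full :: cs => 1 + fullsL cs
  | .branch ds :: cs => fullsL ds + fullsL cs

/-- A list of concrete forests containing (representatives of) every forest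
with at most `n` vertices. -/
def forestsUpTo : ℕ → List (List RTree)
  | 0 => [[]]
  | n+1 => [] :: (forestsUpTo n).flatMap fun l => (forestsUpTo n).map fun F => RTree.node l :: F

/-- Isomorphism of rooted trees (non-planar): a root-preserving bijection, i.e.
the lists of subtrees agree up to permutation and isomorphism. -/
inductive Iso : RTree → RTree → Prop
  | node {l₁ l l₂ : List RTree} : List.Forall₂ Iso l₁ l → l.Perm l₂ → Iso (.node l₁) (.node l₂)

/-- Isomorphism classes of rooted trees. -/
abbrev TreeClass : Type := Quot Iso

/-- Isomorphism classes of rooted forests = multisets of tree classes.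
The empty forest is `0`. -/
abbrev ForestClass : Type := Multiset TreeClass

/-- Isomorphism class of a tree. -/
def clT (t : RTree) : TreeClass := Quot.mk _ t

/-- Isomorphism class of a forest. -/
def clF (F : List RTree) : ForestClass := (F.map clT : List TreeClass)

/-- A concrete representative of a forest class. -/
noncomputable def repF (M : ForestClass) : List RTree := M.toList.map Quot.out

/-- A concrete representative of a tree class. -/
noncomputable def repT (T : TreeClass) : RTree := T.out

/-- Number of vertices of a forest class. -/
noncomputable def sizeC (M : ForestClass) : ℕ := sizeL (repF M)

/-- Number of vertices of a tree class. -/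
noncomputable def sizeT (T : TreeClass) : ℕ := sizeL [repT T]

/-- The Hall algebra `H`: finitely supported ℚ-valued functions on
isomorphism classes of rooted forests, with basis the delta functions. -/
abbrev H : Type := ForestClass →₀ ℚ

/-- The basis element `δ_A` of `H`. -/
noncomputable def delta (A : ForestClass) : H := Finsupp.single A 1

/-- `n(A,B;M)`: the number of admissible cuts `C` of `M` with
`P_C(M) ≅ A` and `R_C(M) ≅ B`. -/
noncomputable def nCuts (A B M : ForestClass) : ℕ :=
  (cutsF (repF M)).countP fun c =>
    decide (clF (Pcut (repF M) c) = A ∧ clF (Rcut (repF M) c) = B)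

/-- A finite set of forest classes containing all classes with at most `n`
vertices. -/
noncomputable def forestCand (n : ℕ) : Finset ForestClass :=
  ((forestsUpTo n).map clF).toFinset

/-- A finite set of tree classes containing all classes with at most `n+1`
vertices. -/
noncomputable def treeCand (n : ℕ) : Finset TreeClass :=
  ((forestsUpTo n).map fun F => clT (RTree.node F)).toFinset

/-- The Hall product on basis elements: `δ_A × δ_B = Σ_M n(A,B;M)·δ_M`
(every `M` with `n(A,B;M) ≠ 0` has exactly `sizeC A + sizeC B` vertices). -/
noncomputable def mulBasis (A B : ForestClass) : H :=
  ∑ M ∈ forestCand (sizeC A + sizeC B), (nCuts A B M : ℚ) • delta M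

/-- The Hall product on `H`, extended bilinearly from basis elements. -/
noncomputable def hmul (f g : H) : H :=
  f.sum fun A a => g.sum fun B b => (a * b) • mulBasis A B

/-- The Connes-Kreimer Lie algebra `n_T` (as a vector space): the span of
isomorphism classes of rooted trees. -/
abbrev nT : Type := TreeClass →₀ ℚ

/-- The basis element of `n_T` corresponding to a rooted tree `T`. -/
noncomputable def tau (T : TreeClass) : nT := Finsupp.single T 1

/-- `a(T₁,T₂;T)`: the number of edges `e` of `T` such that the single-edge cut
at `e` has pruned part `≅ T₁` and root part `≅ T₂`. -/
noncomputable def aCount (T₁ T₂ T : TreeClass) : ℕ :=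
  (cutsF [repT T]).countP fun c =>
    decide (fullsL c = 1 ∧ clF (Pcut [repT T] c) = ({T₁} : Multiset TreeClass)
      ∧ clF (Rcut [repT T] c) = ({T₂} : Multiset TreeClass))

/-- The grafting (pre-Lie) product on basis elements:
`T₁ * T₂ = Σ_T a(T₁,T₂;T)·T`. -/
noncomputable def graftBasis (T₁ T₂ : TreeClass) : nT :=
  ∑ T ∈ treeCand (sizeT T₁ + sizeT T₂), (aCount T₁ T₂ T : ℚ) • tau T

/-- The grafting (pre-Lie) product on `n_T`, extended bilinearly. -/
noncomputable def graft (x y : nT) : nT :=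
  x.sum fun T₁ a => y.sum fun T₂ b => (a * b) • graftBasis T₁ T₂

/-- The Connes-Kreimer bracket `[x,y] = x*y - y*x` on `n_T`. -/
noncomputable def ckBracket (x y : nT) : nT := graft x y - graft y x

/-- `Ẽ_A δ_B = Σ_C δ_{R_C(B)}`, the sum over admissible cuts `C` of `B` with
`P_C(B) ≅ A`. -/
noncomputable def elimBasis (A B : ForestClass) : H :=
  (((cutsF (repF B)).filter fun c => decide (clF (Pcut (repF B) c) = A)).map
    fun c => delta (clF (Rcut (repF B) c))).sum

/-- The elimination operator `E_A` (here on `H ≅ H*`, identifying `φ_B` with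
`δ_B`). -/
noncomputable def elim (A : ForestClass) : H →ₗ[ℚ] H :=
  Finsupp.lsum ℚ fun B => LinearMap.toSpanSingleton ℚ H (elimBasis A B)

/-- `Ẽ^top_A δ_B = Σ_C δ_{P_C(B)}`, the sum over admissible cuts `C` of `B`
with `R_C(B) ≅ A`. -/
noncomputable def topElimBasis (A B : ForestClass) : H :=
  (((cutsF (repF B)).filter fun c => decide (clF (Rcut (repF B) c) = A)).map
    fun c => delta (clF (Pcut (repF B) c))).sum

/-- The top-elimination operator `E^top_A`. -/
noncomputable def topElim (A : ForestClass) : H →ₗ[ℚ] H :=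
  Finsupp.lsum ℚ fun B => LinearMap.toSpanSingleton ℚ H (topElimBasis A B)

/-- `H ⊗ H`, realized as finitely supported functions on pairs of classes. -/
abbrev H2 : Type := (ForestClass × ForestClass) →₀ ℚ

/-- `Δ(δ_M) = Σ δ_A ⊗ δ_B`, the sum over ordered pairs `(A,B)` of classes with
`A ⊔ B ≅ M`. -/
noncomputable def deltaBasis (M : ForestClass) : H2 :=
  ∑ A ∈ M.powerset.toFinset, Finsupp.single (A, M - A) 1

/-- The coproduct `Δ : H → H ⊗ H`. -/
noncomputable def coprod : H →ₗ[ℚ] H2 :=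
  Finsupp.lsum ℚ fun M => LinearMap.toSpanSingleton ℚ H2 (deltaBasis M)

-- ===== auxiliary development =====

def sizeT1 : RTree → ℕ
  | .node l => 1 + sizeL l

lemma sizeL_cons (t : RTree) (ts : List RTree) : sizeL (t :: ts) = sizeT1 t + sizeL ts := by
  cases t with
  | node l => simp [sizeL, sizeT1]

lemma sizeL_eq_sum : ∀ F : List RTree, sizeL F = (F.map sizeT1).sum
  | [] => by simp [sizeL]
  | t :: ts => by rw [sizeL_cons, List.map_cons, List.sum_cons, sizeL_eq_sum ts]

lemma sizeL_append (F G : List RTree) : sizeL (F ++ G) = sizeL F + sizeL G := by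
  simp [sizeL_eq_sum]

lemma sizeL_eq_zero {F : List RTree} (h : sizeL F = 0) : F = [] := by
  cases F with
  | nil => rfl
  | cons t ts => rw [sizeL_cons] at h; cases t with | node l => simp [sizeT1] at h

lemma forall2_size : ∀ {l₁ l : List RTree}, List.Forall₂ Iso l₁ l →
    (∀ a ∈ l₁, ∀ b, Iso a b → sizeT1 a = sizeT1 b) → sizeL l₁ = sizeL l := by
  intro l₁ l hf
  induction hf with
  | nil => intro _; rfl
  | @cons a b l₁' l' hab hrest ih =>
      intro H
      rw [sizeL_cons, sizeL_cons, H a (by simp) b hab,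
        ih fun x hx => H x (by simp [hx])]

lemma iso_size_aux : ∀ n : ℕ, ∀ t₁ t₂ : RTree, sizeT1 t₁ ≤ n → Iso t₁ t₂ →
    sizeT1 t₁ = sizeT1 t₂ := by
  intro n
  induction n with
  | zero => intro t₁ t₂ h _; cases t₁ with | node l => simp [sizeT1] at h
  | succ n ih =>
      intro t₁ t₂ hle hiso
      cases hiso with
      | @node l₁ l l₂ hf hp =>
        have h1 : sizeL l₁ = sizeL l := by
          refine forall2_size hf fun a ha b hab => ih a b ?_ hab
          have h2 : sizeT1 a ≤ sizeL l₁ := by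
            rw [sizeL_eq_sum]
            exact List.single_le_sum (fun _ _ => Nat.zero_le _) _ (List.mem_map_of_mem ha)
          simp [sizeT1] at hle
          omega
        have h2 : sizeL l = sizeL l₂ := by
          rw [sizeL_eq_sum, sizeL_eq_sum]
          exact (hp.map sizeT1).sum_eq
        simp [sizeT1, h1, h2]

lemma iso_size {t₁ t₂ : RTree} (h : Iso t₁ t₂) : sizeT1 t₁ = sizeT1 t₂ :=
  iso_size_aux (sizeT1 t₁) t₁ t₂ le_rfl h

noncomputable def liftSize : TreeClass → ℕ :=
  Quot.lift sizeT1 fun _ _ h => iso_size h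

lemma liftSize_out (q : TreeClass) : sizeT1 q.out = liftSize q := by
  conv_rhs => rw [← Quot.out_eq q]
  rfl

lemma sizeC_eq (M : ForestClass) : sizeC M = (M.map liftSize).sum := by
  conv_rhs => rw [← M.coe_toList]
  rw [Multiset.map_coe, Multiset.sum_coe, sizeC, repF, sizeL_eq_sum, List.map_map]
  congr 1
  exact List.map_congr_left fun q _ => liftSize_out q

lemma sizeC_clF (F : List RTree) : sizeC (clF F) = sizeL F := by
  rw [sizeC_eq, clF, Multiset.map_coe, Multiset.sum_coe, List.map_map, sizeL_eq_sum]
  rfl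

lemma clF_repF (M : ForestClass) : clF (repF M) = M := by
  rw [clF, repF, List.map_map]
  have : clT ∘ (Quot.out : TreeClass → RTree) = id := funext fun q => Quot.out_eq q
  rw [this, List.map_id, Multiset.coe_toList]

lemma cuts_size : ∀ (F : List RTree) (c : List CutShape), c ∈ cutsF F →
    sizeL (Pcut F c) + sizeL (Rcut F c) = sizeL F
  | [], c, h => by
      simp only [cutsF, List.mem_singleton] at h
      subst h; simp [Pcut, Rcut, sizeL]
  | .node l :: ts, c, h => by
      simp only [cutsF, List.mem_flatMap, List.mem_cons, List.mem_map] at h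
      obtain ⟨c0, hc0, cs, hcs, rfl⟩ := h
      rcases hc0 with rfl | ⟨ds, hds, rfl⟩
      · have := cuts_size ts cs hcs
        simp only [Pcut, Rcut, sizeL]
        omega
      · have h1 := cuts_size l ds hds
        have h2 := cuts_size ts cs hcs
        simp only [Pcut, Rcut, sizeL, sizeL_append]
        omega

lemma rcut_of_pcut_nil : ∀ (F : List RTree) (c : List CutShape), c ∈ cutsF F →
    Pcut F c = [] → Rcut F c = F
  | [], c, h, _ => by
      simp only [cutsF, List.mem_singleton] at h
      subst h; simp [Rcut]
  | .node l :: ts, c, h, hp => by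
      simp only [cutsF, List.mem_flatMap, List.mem_cons, List.mem_map] at h
      obtain ⟨c0, hc0, cs, hcs, rfl⟩ := h
      rcases hc0 with rfl | ⟨ds, hds, rfl⟩
      · simp [Pcut] at hp
      · simp only [Pcut, List.append_eq_nil_iff] at hp
        simp only [Rcut]
        rw [rcut_of_pcut_nil l ds hds hp.1, rcut_of_pcut_nil ts cs hcs hp.2]

lemma sum_map_ite {α : Type*} (q : α → Prop) (L : List α) :
    (L.map fun a => if q a then (1 : ℕ) else 0).sum = L.countP fun a => decide (q a) := by
  induction L with
  | nil => rfl
  | cons a L ih =>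
      rw [List.map_cons, List.sum_cons, List.countP_cons, ih]
      by_cases h : q a <;> simp [h] <;> omega

lemma countP_pnil : ∀ F : List RTree,
    ((cutsF F).countP fun c => decide (Pcut F c = [])) = 1
  | [] => by simp [cutsF, Pcut]
  | .node l :: ts => by
      have ihl := countP_pnil l
      have ihts := countP_pnil ts
      rw [cutsF, List.countP_flatMap, List.map_cons, List.sum_cons]
      have hhead : (List.countP (fun c => decide (Pcut (RTree.node l :: ts) c = [])) ∘
          fun c0 => (cutsF ts).map (c0 :: ·)) CutShape.full = 0 := by
        simp only [Function.comp, List.countP_map, List.countP_eq_zero]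
        intro cs _
        simp [Pcut]
      rw [hhead, List.map_map, zero_add]
      have hsum : ∀ L : List (List CutShape),
          (L.map fun ds => List.countP (fun c => decide (Pcut (RTree.node l :: ts) c = []))
            ((cutsF ts).map (CutShape.branch ds :: ·))).sum =
          L.countP fun ds => decide (Pcut l ds = []) := by
        intro L
        induction L with
        | nil => simp
        | cons a L ih =>
            rw [List.map_cons, List.sum_cons, List.countP_cons, ih]
            by_cases h : Pcut l a = []
            · have h1 : List.countP (fun c => decide (Pcut (RTree.node l :: ts) c = []))
                  ((cutsF ts).map (CutShape.branch a :: ·)) = 1 := by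
                rw [List.countP_map, ← ihts]
                apply List.countP_congr
                intro cs _
                simp [Pcut, h]
              rw [h1]
              simp [h]
              omega
            · have h1 : List.countP (fun c => decide (Pcut (RTree.node l :: ts) c = []))
                  ((cutsF ts).map (CutShape.branch a :: ·)) = 0 := by
                rw [List.countP_map, List.countP_eq_zero]
                intro cs _
                simp [Pcut, h]
              rw [h1]
              simp [h]
      exact (hsum (cutsF l)).trans ihl

lemma clF_nil : clF [] = 0 := rfl

lemma topElimBasis_self (Z : ForestClass) : topElimBasis Z Z = delta 0 := by
  rw [topElimBasis]
  have hfil : ((cutsF (repF Z)).filter fun c => decide (clF (Rcut (repF Z) c) = Z)) =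
      ((cutsF (repF Z)).filter fun c => decide (Pcut (repF Z) c = [])) := by
    apply List.filter_congr
    intro c hc
    rw [decide_eq_decide]
    have hsize := cuts_size _ c hc
    constructor
    · intro h
      have h1 := sizeC_clF (Rcut (repF Z) c)
      rw [h] at h1
      have h2 : sizeC Z = sizeL (repF Z) := rfl
      exact sizeL_eq_zero (by omega)
    · intro h
      rw [rcut_of_pcut_nil _ _ hc h, clF_repF]
  rw [hfil]
  have hmap : (((cutsF (repF Z)).filter fun c => decide (Pcut (repF Z) c = [])).map
      fun c => delta (clF (Pcut (repF Z) c))) =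
      (((cutsF (repF Z)).filter fun c => decide (Pcut (repF Z) c = [])).map
      fun _ => delta 0) := by
    apply List.map_congr_left
    intro c hc
    have h := List.of_mem_filter hc
    rw [decide_eq_true_eq] at h
    rw [h, clF_nil]
  rw [hmap, List.map_const', List.sum_replicate, ← List.countP_eq_length_filter,
    countP_pnil, one_smul]

lemma topElimBasis_of_ne (Z B : ForestClass) (hne : B ≠ Z) (hle : sizeC B ≤ sizeC Z) :
    topElimBasis Z B = 0 := by
  rw [topElimBasis]
  have hfil : ((cutsF (repF B)).filter fun c => decide (clF (Rcut (repF B) c) = Z)) = [] := by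
    rw [List.filter_eq_nil_iff]
    intro c hc hdec
    rw [decide_eq_true_eq] at hdec
    have hsize := cuts_size _ c hc
    have h1 := sizeC_clF (Rcut (repF B) c)
    rw [hdec] at h1
    have h2 : sizeC B = sizeL (repF B) := rfl
    have h0 : Pcut (repF B) c = [] := sizeL_eq_zero (by omega)
    exact hne (by rw [← clF_repF B, ← rcut_of_pcut_nil _ _ hc h0, hdec])
  rw [hfil]
  rfl

/-- STATEMENT 17: if `v = Σ_N c_N φ_N` is a nonzero finitely supported element
of `H*` and `Z` is a forest with `c_Z ≠ 0` whose number of vertices is maximal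
among the forests in the support of `v`, then `E^top_Z v = c_Z·φ_∅`. -/
theorem topElim_maximal_term (v : H) (hv : v ≠ 0) (Z : ForestClass)
    (hZ : Z ∈ v.support)
    (hmax : ∀ N ∈ v.support, sizeC N ≤ sizeC Z) :
    topElim Z v = v Z • delta 0 := by
  rw [topElim, Finsupp.lsum_apply]
  have : (v.sum fun B => (LinearMap.toSpanSingleton ℚ H (topElimBasis Z B) : ℚ →ₗ[ℚ] H)) =
      v.sum fun B b => b • topElimBasis Z B := rfl
  rw [this, Finsupp.sum_eq_single Z
    (fun B hB hne => by
      rw [topElimBasis_of_ne Z B hne (hmax B (Finsupp.mem_support_iff.mpr hB)), smul_zero])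
    (fun _ => by rw [zero_smul]), topElimBasis_self]


end CK
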